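/- Let n ∈ ℕ and let s, k be natural numbers with s ≥ 1 and k ≥ s + 1. Let p : ℤ^{n+1} → ℂ satisfy |p(m₀,…,mₙ)| ≤ C·|m₀|^s ⋯ |mₙ|^s for all (m₀,…,mₙ) ∈ ℤ^{n+1} and some constant C > 0. Then there exists a constant C′ > 0 (depending only on n, k, s and C) such that for all finitely supported families a₀, …, aₙ : ℤ → ℂ, Σ_{l∈ℤ} (1+l²)^{k−s} · |Σ_{m₀+⋯+mₙ=l} p(m₀,…,mₙ)·a₀(m₀)⋯aₙ(mₙ)|² ≤ C′ · ∏_{j=0}^{n} ( Σ_{m∈ℤ} (1+m²)^{k} |a_j(m)|² ). -/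

import Mathlib

open Complex

private lemma cs_weighted {α : Type*} (s : Finset α) (u v : α → ℝ) (hu : ∀ m ∈ s, 0 ≤ u m) :
    (∑ m ∈ s, u m * v m) ^ 2 ≤ (∑ m ∈ s, u m) * (∑ m ∈ s, u m * v m ^ 2) :=
  Finset.sum_sq_le_sum_mul_sum_of_sq_eq_mul s hu
    (fun m hm => mul_nonneg (hu m hm) (sq_nonneg _)) (fun m _ => by ring)

private lemma sum_pow_le {n t : ℕ} (x : Fin (n + 1) → ℝ) (hx : ∀ i, 0 ≤ x i) :
    (∑ i, x i) ^ t ≤ ((n : ℝ) + 1) ^ t * ∑ i, x i ^ t := by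
  obtain ⟨j, -, hj⟩ := Finset.exists_max_image Finset.univ x ⟨0, Finset.mem_univ 0⟩
  have h1 : ∑ i, x i ≤ ((n : ℝ) + 1) * x j := by
    have h := Finset.sum_le_card_nsmul Finset.univ x (x j) (fun i _ => hj i (Finset.mem_univ i))
    rw [Finset.card_univ, Fintype.card_fin, nsmul_eq_mul] at h
    push_cast at h
    linarith
  calc (∑ i, x i) ^ t ≤ (((n : ℝ) + 1) * x j) ^ t :=
        pow_le_pow_left₀ (Finset.sum_nonneg fun i _ => hx i) h1 t
    _ = ((n : ℝ) + 1) ^ t * x j ^ t := mul_pow _ _ _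
    _ ≤ ((n : ℝ) + 1) ^ t * ∑ i, x i ^ t := by
        refine mul_le_mul_of_nonneg_left ?_ (by positivity)
        exact Finset.single_le_sum (fun i _ => pow_nonneg (hx i) t) (Finset.mem_univ j)

private lemma summable_inv_one_add_sq : Summable (fun m : ℤ => ((1 : ℝ) + (m : ℝ) ^ 2)⁻¹) := by
  have hshift : Summable (fun n : ℕ => (((n + 1 : ℕ) : ℝ) ^ 2)⁻¹) :=
    (summable_nat_add_iff (f := fun n : ℕ => ((n : ℝ) ^ 2)⁻¹) 1).2
      (Real.summable_nat_pow_inv.2 one_lt_two)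
  have hnat : Summable (fun n : ℕ => ((1 : ℝ) + (n : ℝ) ^ 2)⁻¹) := by
    rw [← summable_nat_add_iff 1]
    refine Summable.of_nonneg_of_le (fun n => by positivity) (fun n => ?_) hshift
    refine inv_anti₀ (by positivity) ?_
    push_cast
    nlinarith [sq_nonneg ((n : ℝ))]
  refine Summable.of_nat_of_neg hnat ?_
  refine hnat.congr fun n => ?_
  push_cast
  ring_nf

set_option maxHeartbeats 1000000 in
/-- If the symbol `p : ℤ^{n+1} → ℂ` satisfies `|p(m₀,…,mₙ)| ≤ C·|m₀|^s⋯|mₙ|^s`, then the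
associated `(n+1)`-multilinear Fourier multiplier operator is bounded from
`H^k × ⋯ × H^k` to `H^{k-s}` (expressed here on the level of finitely supported
Fourier coefficient sequences, using the weights `(1+m²)^k` for the `H^k` norms). -/
theorem multilinear_symbol_estimate (n s k : ℕ) (hs : 1 ≤ s) (hk : s + 1 ≤ k)
    (C : ℝ) (hC : 0 < C) (p : (Fin (n + 1) → ℤ) → ℂ)
    (hp : ∀ m : Fin (n + 1) → ℤ,
      ‖p m‖ ≤ C * ∏ i, ((|m i| : ℤ) : ℝ) ^ s) :
    ∃ C' > 0, ∀ a : Fin (n + 1) → ℤ →₀ ℂ,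
      (∑' l : ℤ, (1 + (l : ℝ) ^ 2) ^ (k - s) *
        ‖∑' m : Fin (n + 1) → ℤ,
          if (∑ i, m i) = l then p m * ∏ i, a i (m i) else 0‖ ^ 2) ≤
      C' * ∏ i, ∑ mm ∈ (a i).support,
        (1 + (mm : ℝ) ^ 2) ^ k * ‖a i mm‖ ^ 2 := by
  classical
  have hsum : Summable (fun m : ℤ => ((1 : ℝ) + (m : ℝ) ^ 2)⁻¹) := summable_inv_one_add_sq
  obtain ⟨K, hKdef⟩ : ∃ x : ℝ, x = ∑' m : ℤ, ((1 : ℝ) + (m : ℝ) ^ 2)⁻¹ := ⟨_, rfl⟩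
  have hK1 : (1 : ℝ) ≤ K := by
    rw [hKdef]
    have h0 : ∑ m ∈ ({0} : Finset ℤ), ((1 : ℝ) + (m : ℝ) ^ 2)⁻¹ ≤
        ∑' m : ℤ, ((1 : ℝ) + (m : ℝ) ^ 2)⁻¹ :=
      Summable.sum_le_tsum _ (fun m _ => by positivity) hsum
    simpa using h0
  have hK0 : (0 : ℝ) < K := lt_of_lt_of_le one_pos hK1
  obtain ⟨t, htdef⟩ : ∃ x : ℕ, x = k - s := ⟨_, rfl⟩
  simp only [← htdef]
  have hts : s + t = k := by omega
  have ht1 : 1 ≤ t := by omega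
  obtain ⟨q, hqdef⟩ : ∃ x : ℤ → ℝ, x = fun m : ℤ => ((1 : ℝ) + (m : ℝ) ^ 2) ^ t := ⟨_, rfl⟩
  have hq1 : ∀ m : ℤ, (1 : ℝ) ≤ q m := by
    intro m
    have h1 : (1 : ℝ) ≤ 1 + (m : ℝ) ^ 2 := by nlinarith [sq_nonneg ((m : ℝ))]
    simpa [hqdef] using pow_le_pow_left₀ zero_le_one h1 t
  have hq0 : ∀ m : ℤ, (0 : ℝ) < q m := fun m => lt_of_lt_of_le one_pos (hq1 m)
  have hKt : ∀ S : Finset ℤ, ∑ m ∈ S, (q m)⁻¹ ≤ K := by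
    intro S
    calc ∑ m ∈ S, (q m)⁻¹ ≤ ∑ m ∈ S, ((1 : ℝ) + (m : ℝ) ^ 2)⁻¹ := by
          refine Finset.sum_le_sum fun m _ => ?_
          refine inv_anti₀ (by positivity) ?_
          simp only [hqdef]
          exact le_self_pow₀ (by nlinarith [sq_nonneg ((m : ℝ))]) (by omega)
      _ ≤ K := by
          rw [hKdef]
          exact Summable.sum_le_tsum S (fun m _ => by positivity) hsum
  refine ⟨((n : ℝ) + 1) * K ^ (n + 1) * (((n : ℝ) + 1) ^ (2 * t) * C ^ 2), by positivity,
    fun a => ?_⟩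
  obtain ⟨S, hSdef⟩ : ∃ x : Finset (Fin (n + 1) → ℤ),
      x = Fintype.piFinset (fun i => (a i).support) := ⟨_, rfl⟩
  have hFzero : ∀ m : Fin (n + 1) → ℤ, m ∉ S → p m * ∏ i, a i (m i) = 0 := by
    intro m hm
    rw [hSdef, Fintype.mem_piFinset] at hm
    push_neg at hm
    obtain ⟨i, hi⟩ := hm
    have hzero : a i (m i) = 0 := by
      by_contra hne
      exact hi (Finsupp.mem_support_iff.mpr hne)
    rw [Finset.prod_eq_zero (Finset.mem_univ i) hzero, mul_zero]
  have hinner : ∀ l : ℤ,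
      (∑' m : Fin (n + 1) → ℤ, if (∑ i, m i) = l then p m * ∏ i, a i (m i) else 0) =
        ∑ m ∈ S.filter (fun m => (∑ i, m i) = l), p m * ∏ i, a i (m i) := by
    intro l
    refine (tsum_eq_sum ?_).trans (Finset.sum_congr rfl ?_)
    · intro m hm
      by_cases h : (∑ i, m i) = l
      · rw [if_pos h]
        exact hFzero m fun hmS => hm (Finset.mem_filter.mpr ⟨hmS, h⟩)
      · rw [if_neg h]
    · intro m hm
      rw [if_pos (Finset.mem_filter.mp hm).2]
  obtain ⟨L, hLdef⟩ : ∃ x : Finset ℤ, x = S.image (fun m => ∑ i, m i) := ⟨_, rfl⟩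
  have hLHS : (∑' l : ℤ, (1 + (l : ℝ) ^ 2) ^ t *
        ‖∑' m : Fin (n + 1) → ℤ,
          if (∑ i, m i) = l then p m * ∏ i, a i (m i) else 0‖ ^ 2) =
      ∑ l ∈ L, (1 + (l : ℝ) ^ 2) ^ t *
        ‖∑ m ∈ S.filter (fun m => (∑ i, m i) = l),
          p m * ∏ i, a i (m i)‖ ^ 2 := by
    rw [tsum_congr (fun l => by rw [hinner l])]
    refine tsum_eq_sum ?_
    intro l hl
    have hempty : S.filter (fun m => (∑ i, m i) = l) = ∅ := by
      refine Finset.filter_eq_empty_iff.mpr fun m hm h => hl ?_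
      rw [hLdef]
      exact Finset.mem_image.mpr ⟨m, hm, h⟩
    rw [hempty]
    simp
  rw [hLHS]
  have hRHS : (∏ i, ∑ mm ∈ (a i).support,
      (1 + (mm : ℝ) ^ 2) ^ k * ‖a i mm‖ ^ 2) =
      ∑ m ∈ S, ∏ i, (1 + ((m i : ℤ) : ℝ) ^ 2) ^ k * ‖a i (m i)‖ ^ 2 := by
    rw [hSdef]
    exact Finset.prod_univ_sum (fun i => (a i).support)
      (fun i mm => (1 + (mm : ℝ) ^ 2) ^ k * ‖a i mm‖ ^ 2)
  have key : ∀ l : ℤ,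
      (1 + (l : ℝ) ^ 2) ^ t *
          ‖∑ m ∈ S.filter (fun m => (∑ i, m i) = l),
            p m * ∏ i, a i (m i)‖ ^ 2 ≤
        ((n : ℝ) + 1) * K ^ (n + 1) * (((n : ℝ) + 1) ^ (2 * t) * C ^ 2 *
          ∑ m ∈ S.filter (fun m => (∑ i, m i) = l),
            ∏ i, (1 + ((m i : ℤ) : ℝ) ^ 2) ^ k * ‖a i (m i)‖ ^ 2) := by
    intro l
    obtain ⟨fib, hfib⟩ : ∃ x : Finset (Fin (n + 1) → ℤ),
        x = S.filter (fun m => (∑ i, m i) = l) := ⟨_, rfl⟩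
    rw [← hfib]
    obtain ⟨G, hGdef⟩ : ∃ x : (Fin (n + 1) → ℤ) → ℝ,
        x = fun m => ‖p m * ∏ i, a i (m i)‖ := ⟨_, rfl⟩
    obtain ⟨H, hHdef⟩ : ∃ x : (Fin (n + 1) → ℤ) → ℝ,
        x = fun m => ∏ i, (1 + ((m i : ℤ) : ℝ) ^ 2) ^ k * ‖a i (m i)‖ ^ 2 := ⟨_, rfl⟩
    have hHm : ∀ m : Fin (n + 1) → ℤ,
        (∏ i, (1 + ((m i : ℤ) : ℝ) ^ 2) ^ k * ‖a i (m i)‖ ^ 2) = H m := by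
      intro m
      rw [hHdef]
    simp only [hHm]
    obtain ⟨u, hudef⟩ : ∃ x : (Fin (n + 1) → ℤ) → ℝ,
        x = fun m => ∑ j, ∏ i ∈ Finset.univ.erase j, (q (m i))⁻¹ := ⟨_, rfl⟩
    have hupos : ∀ m, 0 < u m := by
      intro m
      rw [hudef]
      exact Finset.sum_pos (fun j _ => Finset.prod_pos fun i _ => inv_pos.mpr (hq0 _))
        ⟨0, Finset.mem_univ 0⟩
    have hGnn : ∀ m, 0 ≤ G m := by
      intro m
      rw [hGdef]
      exact norm_nonneg _
    have hHnn : ∀ m, 0 ≤ H m := by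
      intro m
      rw [hHdef]
      exact Finset.prod_nonneg fun i _ => mul_nonneg (by positivity) (sq_nonneg _)
    -- bound for the sum of the weights u over the fiber
    have h4 : ∑ m ∈ fib, u m ≤ ((n : ℝ) + 1) * K ^ (n + 1) := by
      have h4j : ∀ j : Fin (n + 1),
          ∑ m ∈ fib, ∏ i ∈ Finset.univ.erase j, (q (m i))⁻¹ ≤ K ^ (n + 1) := by
        intro j
        have hval : ∀ m : Fin (n + 1) → ℤ,
            ∏ i ∈ Finset.univ.erase j, (q (m i))⁻¹ =
              ∏ i, (q (Function.update m j 0 i))⁻¹ := by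
          intro m
          rw [← Finset.prod_erase_mul Finset.univ _ (Finset.mem_univ j)]
          have h0 : (q (Function.update m j 0 j))⁻¹ = 1 := by
            rw [Function.update_self]
            simp [hqdef]
          rw [h0, mul_one]
          exact Finset.prod_congr rfl fun i hi => by
            rw [Function.update_of_ne (Finset.ne_of_mem_erase hi)]
        have hinj : ∀ m ∈ fib, ∀ m' ∈ fib,
            Function.update m j 0 = Function.update m' j 0 → m = m' := by
          intro m hm m' hm' h
          rw [hfib, Finset.mem_filter] at hm hm'
          have hsm1 : (∑ i, m i) = l := hm.2
          have hsm2 : (∑ i, m' i) = l := hm'.2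
          have hoff : ∀ i, i ≠ j → m i = m' i := by
            intro i hij
            have h' := congrFun h i
            rwa [Function.update_of_ne hij, Function.update_of_ne hij] at h'
          funext i
          by_cases hij : i = j
          · subst hij
            have e1 : m i + ∑ i' ∈ Finset.univ.erase i, m i' = l := by
              rw [Finset.add_sum_erase _ _ (Finset.mem_univ i)]
              exact hsm1
            have e2 : m' i + ∑ i' ∈ Finset.univ.erase i, m' i' = l := by
              rw [Finset.add_sum_erase _ _ (Finset.mem_univ i)]
              exact hsm2
            have e3 : ∑ i' ∈ Finset.univ.erase i, m i' =
                ∑ i' ∈ Finset.univ.erase i, m' i' :=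
              Finset.sum_congr rfl fun i' hi' => hoff i' (Finset.ne_of_mem_erase hi')
            omega
          · exact hoff i hij
        have hmaps : ∀ m ∈ fib, Function.update m j 0 ∈
            Fintype.piFinset (fun i => insert (0 : ℤ) ((a i).support)) := by
          intro m hm
          rw [hfib, Finset.mem_filter] at hm
          rw [Fintype.mem_piFinset]
          intro i
          by_cases hij : i = j
          · subst hij
            rw [Function.update_self]
            exact Finset.mem_insert_self _ _
          · rw [Function.update_of_ne hij]
            have hmS : m ∈ S := hm.1
            rw [hSdef, Fintype.mem_piFinset] at hmS
            exact Finset.mem_insert_of_mem (hmS i)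
        calc ∑ m ∈ fib, ∏ i ∈ Finset.univ.erase j, (q (m i))⁻¹
            = ∑ m ∈ fib, ∏ i, (q (Function.update m j 0 i))⁻¹ :=
              Finset.sum_congr rfl fun m _ => hval m
          _ = ∑ y ∈ fib.image (fun m => Function.update m j 0), ∏ i, (q (y i))⁻¹ :=
              (Finset.sum_image (f := fun y => ∏ i, (q (y i))⁻¹)
                (g := fun m => Function.update m j 0) hinj).symm
          _ ≤ ∑ y ∈ Fintype.piFinset (fun i => insert (0 : ℤ) ((a i).support)),
                ∏ i, (q (y i))⁻¹ := by
              refine Finset.sum_le_sum_of_subset_of_nonneg ?_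
                (fun y _ _ => Finset.prod_nonneg fun i _ => (inv_pos.mpr (hq0 _)).le)
              intro y hy
              obtain ⟨m, hm, rfl⟩ := Finset.mem_image.mp hy
              exact hmaps m hm
          _ = ∏ i : Fin (n + 1), ∑ mm ∈ insert (0 : ℤ) ((a i).support), (q mm)⁻¹ :=
              (Finset.prod_univ_sum (fun i => insert (0 : ℤ) ((a i).support))
                (fun _ mm => (q mm)⁻¹)).symm
          _ ≤ ∏ _i : Fin (n + 1), K :=
              Finset.prod_le_prod
                (fun i _ => Finset.sum_nonneg fun mm _ => (inv_pos.mpr (hq0 _)).le)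
                (fun i _ => hKt _)
          _ = K ^ (n + 1) := by
              rw [Finset.prod_const, Finset.card_univ, Fintype.card_fin]
      calc ∑ m ∈ fib, u m
          = ∑ j : Fin (n + 1), ∑ m ∈ fib, ∏ i ∈ Finset.univ.erase j, (q (m i))⁻¹ := by
            simp only [hudef]
            exact Finset.sum_comm
        _ ≤ ∑ _j : Fin (n + 1), K ^ (n + 1) := Finset.sum_le_sum fun j _ => h4j j
        _ = ((n : ℝ) + 1) * K ^ (n + 1) := by
            rw [Finset.sum_const, Finset.card_univ, Fintype.card_fin, nsmul_eq_mul]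
            push_cast
            ring
    -- pointwise estimate
    have h5 : ∀ m ∈ fib, (1 + (l : ℝ) ^ 2) ^ t * (u m * (G m / u m) ^ 2) ≤
        ((n : ℝ) + 1) ^ (2 * t) * C ^ 2 * H m := by
      intro m hm
      rw [hfib, Finset.mem_filter] at hm
      have hml : (∑ i, m i) = l := hm.2
      obtain ⟨Q, hQ⟩ : ∃ x : ℝ, x = ∑ j, q (m j) := ⟨_, rfl⟩
      obtain ⟨P, hP⟩ : ∃ x : ℝ, x = ∏ i, q (m i) := ⟨_, rfl⟩
      have hQpos : 0 < Q := by
        rw [hQ]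
        exact Finset.sum_pos (fun j _ => hq0 _) ⟨0, Finset.mem_univ 0⟩
      have hPpos : 0 < P := by
        rw [hP]
        exact Finset.prod_pos fun i _ => hq0 _
      have huQP : u m = Q / P := by
        have hterm : ∀ j : Fin (n + 1),
            ∏ i ∈ Finset.univ.erase j, (q (m i))⁻¹ = q (m j) / P := by
          intro j
          have hP' : q (m j) * ∏ i ∈ Finset.univ.erase j, q (m i) = ∏ i, q (m i) :=
            Finset.mul_prod_erase Finset.univ (fun i => q (m i)) (Finset.mem_univ j)
          have hprodpos : 0 < ∏ i ∈ Finset.univ.erase j, q (m i) :=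
            Finset.prod_pos fun i _ => hq0 _
          rw [Finset.prod_inv_distrib, eq_div_iff hPpos.ne', hP, ← hP', mul_comm (q (m j)),
            inv_mul_cancel_left₀ hprodpos.ne']
        calc u m = ∑ j, q (m j) / P := by
              simp only [hudef]
              exact Finset.sum_congr rfl fun j _ => hterm j
          _ = Q / P := by
              rw [hQ]
              exact (Finset.sum_div _ _ _).symm
      have hW : (1 + (l : ℝ) ^ 2) ^ t ≤ ((n : ℝ) + 1) ^ (2 * t) * Q := by
        have hl : (l : ℝ) = ∑ i, ((m i : ℤ) : ℝ) := by
          rw [← hml]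
          push_cast
          rfl
        have hCS : ((l : ℝ)) ^ 2 ≤ ((n : ℝ) + 1) * ∑ i, ((m i : ℤ) : ℝ) ^ 2 := by
          rw [hl]
          have h := Finset.sum_mul_sq_le_sq_mul_sq Finset.univ (fun _ => (1 : ℝ))
            (fun i => ((m i : ℤ) : ℝ))
          simp only [one_mul, one_pow, Finset.sum_const, Finset.card_univ,
            Fintype.card_fin, nsmul_eq_mul, mul_one] at h
          calc (∑ i, ((m i : ℤ) : ℝ)) ^ 2 ≤ ((n + 1 : ℕ) : ℝ) * ∑ i, ((m i : ℤ) : ℝ) ^ 2 := h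
            _ = ((n : ℝ) + 1) * ∑ i, ((m i : ℤ) : ℝ) ^ 2 := by push_cast; ring
        have ha : (1 : ℝ) + (l : ℝ) ^ 2 ≤
            ((n : ℝ) + 1) * ∑ i, (1 + ((m i : ℤ) : ℝ) ^ 2) := by
          have hsplit : ∑ i : Fin (n + 1), ((1 : ℝ) + ((m i : ℤ) : ℝ) ^ 2) =
              ((n : ℝ) + 1) + ∑ i, ((m i : ℤ) : ℝ) ^ 2 := by
            rw [Finset.sum_add_distrib, Finset.sum_const, Finset.card_univ, Fintype.card_fin,
              nsmul_eq_mul, mul_one]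
            push_cast
            ring
          rw [hsplit]
          have hn0 : (0 : ℝ) ≤ (n : ℝ) := Nat.cast_nonneg n
          nlinarith [hCS]
        calc (1 + (l : ℝ) ^ 2) ^ t
            ≤ (((n : ℝ) + 1) * ∑ i, (1 + ((m i : ℤ) : ℝ) ^ 2)) ^ t :=
              pow_le_pow_left₀ (by positivity) ha t
          _ = ((n : ℝ) + 1) ^ t * (∑ i, (1 + ((m i : ℤ) : ℝ) ^ 2)) ^ t := mul_pow _ _ _
          _ ≤ ((n : ℝ) + 1) ^ t *
                (((n : ℝ) + 1) ^ t * ∑ i, (1 + ((m i : ℤ) : ℝ) ^ 2) ^ t) :=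
              mul_le_mul_of_nonneg_left (sum_pow_le _ fun i => by positivity) (by positivity)
          _ = ((n : ℝ) + 1) ^ (2 * t) * Q := by
              rw [hQ]
              simp only [hqdef]
              rw [← mul_assoc, ← pow_add, two_mul]
      have hGH : G m ^ 2 * P ≤ C ^ 2 * H m := by
        have hG1 : G m ≤ C * ∏ i, (((|m i| : ℤ) : ℝ) ^ s * ‖a i (m i)‖) := by
          calc G m = ‖p m‖ * ∏ i, ‖a i (m i)‖ := by
                simp only [hGdef]
                rw [norm_mul, norm_prod]
            _ ≤ (C * ∏ i, ((|m i| : ℤ) : ℝ) ^ s) * ∏ i, ‖a i (m i)‖ :=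
                mul_le_mul_of_nonneg_right (hp m)
                  (Finset.prod_nonneg fun i _ => norm_nonneg _)
            _ = C * ∏ i, (((|m i| : ℤ) : ℝ) ^ s * ‖a i (m i)‖) := by
                rw [mul_assoc, ← Finset.prod_mul_distrib]
        have hG2 : G m ^ 2 ≤
            C ^ 2 * ∏ i, ((((m i : ℤ) : ℝ)) ^ 2) ^ s * ‖a i (m i)‖ ^ 2 := by
          calc G m ^ 2 ≤ (C * ∏ i, (((|m i| : ℤ) : ℝ) ^ s * ‖a i (m i)‖)) ^ 2 :=
                pow_le_pow_left₀ (hGnn m) hG1 2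
            _ = C ^ 2 * ∏ i, ((((m i : ℤ) : ℝ)) ^ 2) ^ s * ‖a i (m i)‖ ^ 2 := by
                rw [mul_pow, ← Finset.prod_pow]
                congr 1
                refine Finset.prod_congr rfl fun i _ => ?_
                rw [mul_pow]
                congr 1
                rw [← pow_mul, mul_comm s 2, pow_mul, Int.cast_abs, _root_.sq_abs]
        calc G m ^ 2 * P
            ≤ (C ^ 2 * ∏ i, ((((m i : ℤ) : ℝ)) ^ 2) ^ s * ‖a i (m i)‖ ^ 2) * P :=
              mul_le_mul_of_nonneg_right hG2 hPpos.le
          _ = C ^ 2 * ∏ i, (((((m i : ℤ) : ℝ)) ^ 2) ^ s * ‖a i (m i)‖ ^ 2 *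
                q (m i)) := by
              rw [hP, mul_assoc, ← Finset.prod_mul_distrib]
          _ ≤ C ^ 2 * H m := by
              rw [hHdef]
              refine mul_le_mul_of_nonneg_left (Finset.prod_le_prod ?_ ?_) (by positivity)
              · intro i _
                exact mul_nonneg (mul_nonneg (by positivity) (sq_nonneg _)) (hq0 _).le
              · intro i _
                have h1 : ((((m i : ℤ) : ℝ)) ^ 2) ^ s ≤ (1 + ((m i : ℤ) : ℝ) ^ 2) ^ s := by
                  refine pow_le_pow_left₀ (sq_nonneg _) ?_ s
                  linarith [sq_nonneg (((m i : ℤ) : ℝ))]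
                simp only [hqdef]
                calc ((((m i : ℤ) : ℝ)) ^ 2) ^ s * ‖a i (m i)‖ ^ 2 *
                      ((1 : ℝ) + ((m i : ℤ) : ℝ) ^ 2) ^ t
                    ≤ (1 + ((m i : ℤ) : ℝ) ^ 2) ^ s * ‖a i (m i)‖ ^ 2 *
                      ((1 : ℝ) + ((m i : ℤ) : ℝ) ^ 2) ^ t := by
                      refine mul_le_mul_of_nonneg_right
                        (mul_le_mul_of_nonneg_right h1 (sq_nonneg _)) (by positivity)
                  _ = (1 + ((m i : ℤ) : ℝ) ^ 2) ^ k * ‖a i (m i)‖ ^ 2 := by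
                      rw [mul_right_comm, ← pow_add, hts]
      have hueq : u m * (G m / u m) ^ 2 = G m ^ 2 * P / Q := by
        rw [huQP]
        field_simp [hQpos.ne', hPpos.ne']
      rw [hueq]
      calc (1 + (l : ℝ) ^ 2) ^ t * (G m ^ 2 * P / Q)
          ≤ (((n : ℝ) + 1) ^ (2 * t) * Q) * (G m ^ 2 * P / Q) := by
            refine mul_le_mul_of_nonneg_right hW ?_
            exact div_nonneg (mul_nonneg (sq_nonneg _) hPpos.le) hQpos.le
        _ = ((n : ℝ) + 1) ^ (2 * t) * (G m ^ 2 * P) := by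
            field_simp [hQpos.ne']
        _ ≤ ((n : ℝ) + 1) ^ (2 * t) * (C ^ 2 * H m) :=
            mul_le_mul_of_nonneg_left hGH (by positivity)
        _ = ((n : ℝ) + 1) ^ (2 * t) * C ^ 2 * H m := by ring
    -- Cauchy–Schwarz step
    have habs : ‖∑ m ∈ fib, (p m * ∏ i, a i (m i))‖ ^ 2 ≤
        (∑ m ∈ fib, G m) ^ 2 := by
      refine pow_le_pow_left₀ (norm_nonneg _) ?_ 2
      simpa only [hGdef] using norm_sum_le fib
        (fun m => p m * ∏ i, a i (m i))
    have h3 : (∑ m ∈ fib, G m) ^ 2 ≤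
        (∑ m ∈ fib, u m) * (∑ m ∈ fib, u m * (G m / u m) ^ 2) := by
      have hcs := cs_weighted fib u (fun m => G m / u m) (fun m _ => (hupos m).le)
      have heq : ∑ m ∈ fib, u m * (G m / u m) = ∑ m ∈ fib, G m :=
        Finset.sum_congr rfl fun m _ => by
          rw [mul_comm, div_mul_cancel₀ _ (hupos m).ne']
      rw [heq] at hcs
      exact hcs
    calc (1 + (l : ℝ) ^ 2) ^ t *
          ‖∑ m ∈ fib, (p m * ∏ i, a i (m i))‖ ^ 2
        ≤ (1 + (l : ℝ) ^ 2) ^ t *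
            ((∑ m ∈ fib, u m) * (∑ m ∈ fib, u m * (G m / u m) ^ 2)) :=
          mul_le_mul_of_nonneg_left (habs.trans h3) (by positivity)
      _ = (∑ m ∈ fib, u m) *
            (∑ m ∈ fib, (1 + (l : ℝ) ^ 2) ^ t * (u m * (G m / u m) ^ 2)) := by
          rw [← Finset.mul_sum]
          ring
      _ ≤ (((n : ℝ) + 1) * K ^ (n + 1)) *
            (∑ m ∈ fib, ((n : ℝ) + 1) ^ (2 * t) * C ^ 2 * H m) := by
          refine mul_le_mul h4 (Finset.sum_le_sum h5) ?_ (by positivity)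
          refine Finset.sum_nonneg fun m _ => mul_nonneg (by positivity)
            (mul_nonneg (hupos m).le (sq_nonneg _))
      _ = ((n : ℝ) + 1) * K ^ (n + 1) *
            (((n : ℝ) + 1) ^ (2 * t) * C ^ 2 * ∑ m ∈ fib, H m) := by
          rw [← Finset.mul_sum]
  calc ∑ l ∈ L, (1 + (l : ℝ) ^ 2) ^ t *
        ‖∑ m ∈ S.filter (fun m => (∑ i, m i) = l),
          p m * ∏ i, a i (m i)‖ ^ 2
      ≤ ∑ l ∈ L, ((n : ℝ) + 1) * K ^ (n + 1) * (((n : ℝ) + 1) ^ (2 * t) * C ^ 2 *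
          ∑ m ∈ S.filter (fun m => (∑ i, m i) = l),
            ∏ i, (1 + ((m i : ℤ) : ℝ) ^ 2) ^ k * ‖a i (m i)‖ ^ 2) :=
        Finset.sum_le_sum fun l _ => key l
    _ = ((n : ℝ) + 1) * K ^ (n + 1) * (((n : ℝ) + 1) ^ (2 * t) * C ^ 2) *
          ∑ l ∈ L, ∑ m ∈ S.filter (fun m => (∑ i, m i) = l),
            ∏ i, (1 + ((m i : ℤ) : ℝ) ^ 2) ^ k * ‖a i (m i)‖ ^ 2 := by
        rw [Finset.mul_sum]
        exact Finset.sum_congr rfl fun l _ => by ring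
    _ = ((n : ℝ) + 1) * K ^ (n + 1) * (((n : ℝ) + 1) ^ (2 * t) * C ^ 2) *
          ∑ m ∈ S, ∏ i, (1 + ((m i : ℤ) : ℝ) ^ 2) ^ k * ‖a i (m i)‖ ^ 2 := by
        rw [hLdef, Finset.sum_fiberwise_of_maps_to (g := fun m : Fin (n + 1) → ℤ => ∑ i, m i)
          (fun m hm => Finset.mem_image_of_mem _ hm)]
    _ = ((n : ℝ) + 1) * K ^ (n + 1) * (((n : ℝ) + 1) ^ (2 * t) * C ^ 2) *
          ∏ i, ∑ mm ∈ (a i).support,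
            (1 + (mm : ℝ) ^ 2) ^ k * ‖a i mm‖ ^ 2 := by
        rw [hRHS]
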